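/- arXiv:2302.03656 — 3 statements merged into one kernel-verified Lean document; each statement's English description precedes it below -/
import Mathlib

section
/- As p_s → ∞, the maximum sensing rate R_s(p_s) = max over S with tr(SS^H) ≤ L p_s of (M/L) log₂ det(I + σ⁻² S^H R S) satisfies R_s(p_s) − (NM/L)(log₂ p_s − (1/N)·Σ_{n=1}^N log₂(N σ²/(L λ_n))) → 0, i.e., the high-SNR slope is NM/L and the high-SNR power offset is (1/N)Σ_n log₂(N σ²/(L λ_n)). -/
open Matrix Finset Filter
open scoped ComplexOrder

private lemma amgm_aux {N : ℕ} (hN : 0 < N) (x : Fin N → ℝ) (hx : ∀ i, 0 ≤ x i) :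
    ∏ i, x i ≤ ((∑ i, x i) / N) ^ N := by
  have h := Real.geom_mean_le_arith_mean (Finset.univ : Finset (Fin N)) (fun _ => 1) x
    (fun _ _ => zero_le_one) (by simp [hN]) (fun i _ => hx i)
  simp only [Real.rpow_one, Finset.sum_const, Finset.card_univ, Fintype.card_fin,
    nsmul_eq_mul, mul_one, one_mul] at h
  have hprod : 0 ≤ ∏ i, x i := Finset.prod_nonneg fun i _ => hx i
  have h2 : ((∏ i, x i) ^ ((N : ℝ))⁻¹) ^ (N : ℕ) ≤ ((∑ i, x i) / N) ^ N :=
    pow_le_pow_left₀ (Real.rpow_nonneg hprod _) h N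
  rwa [← Real.rpow_natCast ((∏ i, x i) ^ ((N : ℝ))⁻¹) N, ← Real.rpow_mul hprod,
    inv_mul_cancel₀ (by positivity), Real.rpow_one] at h2

private lemma trace_eq_sum_eigen {N : ℕ} {A : Matrix (Fin N) (Fin N) ℂ} (hA : A.IsHermitian) :
    A.trace = ∑ i, (hA.eigenvalues i : ℂ) := by
  conv_lhs => rw [hA.spectral_theorem]
  rw [Unitary.conjStarAlgAut_apply, Matrix.trace_mul_cycle, Unitary.coe_star_mul_self, Matrix.one_mul,
    Matrix.trace_diagonal]
  simp

private lemma trace_re_nonneg {N : ℕ} {A : Matrix (Fin N) (Fin N) ℂ} (hA : A.PosSemidef) :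
    0 ≤ A.trace.re := by
  have h := congrArg Complex.re (trace_eq_sum_eigen hA.isHermitian)
  rw [← Complex.ofReal_sum, Complex.ofReal_re] at h
  rw [h]
  exact Finset.sum_nonneg fun i _ => hA.eigenvalues_nonneg i

private lemma key_det {N L : ℕ} (U : Matrix (Fin N) (Fin N) ℂ)
    (lam : Fin N → ℝ) (hlam : ∀ n, 0 < lam n) (σ2 : ℝ) (hσ2 : 0 < σ2)
    (S : Matrix (Fin N) (Fin L) ℂ) :
    (↑(∏ n, σ2 / lam n) : ℂ) *
        Matrix.det (1 + (σ2 : ℂ)⁻¹ • (Sᴴ * (Uᴴ * Matrix.diagonal (fun n => (lam n : ℂ)) * U) * S))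
      = Matrix.det (Matrix.diagonal (fun n => ((σ2 / lam n : ℝ) : ℂ)) + U * (S * Sᴴ) * Uᴴ) := by
  have hσ2C : (σ2 : ℂ) ≠ 0 := by exact_mod_cast hσ2.ne'
  have h1 : Matrix.diagonal (fun n => ((σ2 / lam n : ℝ) : ℂ)) *
      Matrix.diagonal (fun n => (lam n : ℂ)) = (σ2 : ℂ) • (1 : Matrix (Fin N) (Fin N) ℂ) := by
    rw [Matrix.diagonal_mul_diagonal]
    ext i j
    by_cases h : i = j
    · subst h
      have : (lam i : ℂ) ≠ 0 := by exact_mod_cast (hlam i).ne'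
      simp [Matrix.diagonal_apply_eq, Matrix.one_apply_eq, Complex.ofReal_div,
        div_mul_cancel₀ _ this]
    · simp [Matrix.diagonal_apply_ne _ h, Matrix.one_apply_ne h]
  have hDfact : Matrix.diagonal (fun n => ((σ2 / lam n : ℝ) : ℂ)) + U * (S * Sᴴ) * Uᴴ
      = Matrix.diagonal (fun n => ((σ2 / lam n : ℝ) : ℂ)) *
        (1 + (σ2 : ℂ)⁻¹ • (Matrix.diagonal (fun n => (lam n : ℂ)) * (U * (S * Sᴴ) * Uᴴ))) := by
    rw [Matrix.mul_add, Matrix.mul_one, mul_smul_comm,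
      ← Matrix.mul_assoc (Matrix.diagonal fun n => ((σ2 / lam n : ℝ) : ℂ))
        (Matrix.diagonal fun n => (lam n : ℂ)) (U * (S * Sᴴ) * Uᴴ), h1,
      Matrix.smul_mul, Matrix.one_mul, smul_smul, inv_mul_cancel₀ hσ2C, one_smul]
  have e1 : (σ2 : ℂ)⁻¹ • (Matrix.diagonal (fun n => (lam n : ℂ)) * (U * (S * Sᴴ) * Uᴴ))
      = ((σ2 : ℂ)⁻¹ • (Matrix.diagonal (fun n => (lam n : ℂ)) * U * S)) * (Sᴴ * Uᴴ) := by
    rw [Matrix.smul_mul]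
    congr 1
    simp [Matrix.mul_assoc]
  have e2 : (Sᴴ * Uᴴ) * ((σ2 : ℂ)⁻¹ • (Matrix.diagonal (fun n => (lam n : ℂ)) * U * S))
      = (σ2 : ℂ)⁻¹ • (Sᴴ * (Uᴴ * Matrix.diagonal (fun n => (lam n : ℂ)) * U) * S) := by
    rw [Matrix.mul_smul]
    congr 1
    simp [Matrix.mul_assoc]
  rw [hDfact, Matrix.det_mul, Matrix.det_diagonal, e1, Matrix.det_one_add_mul_comm, e2,
    Complex.ofReal_prod]

private lemma detX_eq_aux {N L : ℕ} (U : Matrix (Fin N) (Fin N) ℂ)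
    (lam : Fin N → ℝ) (hlam : ∀ n, 0 < lam n) (σ2 : ℝ) (hσ2 : 0 < σ2)
    (S : Matrix (Fin N) (Fin L) ℂ) :
    Matrix.det (1 + (σ2 : ℂ)⁻¹ • (Sᴴ * (Uᴴ * Matrix.diagonal (fun n => (lam n : ℂ)) * U) * S))
      = (↑(∏ n, lam n / σ2) : ℂ) *
        Matrix.det (Matrix.diagonal (fun n => ((σ2 / lam n : ℝ) : ℂ)) + U * (S * Sᴴ) * Uᴴ) := by
  have hkey := key_det U lam hlam σ2 hσ2 S
  have hp : 0 < ∏ n, σ2 / lam n := Finset.prod_pos fun n _ => div_pos hσ2 (hlam n)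
  have hq : (∏ n, lam n / σ2) = (∏ n, σ2 / lam n)⁻¹ := by
    rw [← Finset.prod_inv_distrib]
    exact Finset.prod_congr rfl fun n _ => (inv_div _ _).symm
  rw [← hkey, hq, ← mul_assoc, ← Complex.ofReal_mul, inv_mul_cancel₀ hp.ne',
    Complex.ofReal_one, one_mul]

private lemma Bc_posDef {N L : ℕ} (U : Matrix (Fin N) (Fin N) ℂ)
    (lam : Fin N → ℝ) (hlam : ∀ n, 0 < lam n) (σ2 : ℝ) (hσ2 : 0 < σ2)
    (S : Matrix (Fin N) (Fin L) ℂ) :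
    (Matrix.diagonal (fun n => ((σ2 / lam n : ℝ) : ℂ)) + U * (S * Sᴴ) * Uᴴ).PosDef := by
  refine (Matrix.posDef_diagonal_iff.mpr fun n => ?_).add_posSemidef ?_
  · exact_mod_cast Complex.zero_lt_real.mpr (div_pos hσ2 (hlam n))
  · have h : U * (S * Sᴴ) * Uᴴ = (U * S) * (U * S)ᴴ := by
      rw [Matrix.conjTranspose_mul]
      simp [Matrix.mul_assoc]
    rw [h]
    exact Matrix.posSemidef_self_mul_conjTranspose _

private lemma detX_bound {N L : ℕ} (hN : 0 < N) (U : Matrix (Fin N) (Fin N) ℂ) (hU : Uᴴ * U = 1)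
    (lam : Fin N → ℝ) (hlam : ∀ n, 0 < lam n) (σ2 : ℝ) (hσ2 : 0 < σ2)
    (S : Matrix (Fin N) (Fin L) ℂ) :
    0 < (Matrix.det (1 + (σ2 : ℂ)⁻¹ •
        (Sᴴ * (Uᴴ * Matrix.diagonal (fun n => (lam n : ℂ)) * U) * S))).re ∧
    (Matrix.det (1 + (σ2 : ℂ)⁻¹ •
        (Sᴴ * (Uᴴ * Matrix.diagonal (fun n => (lam n : ℂ)) * U) * S))).re ≤
      (∏ n, lam n / σ2) *
        (((∑ n, σ2 / lam n) + (Matrix.trace (S * Sᴴ)).re) / N) ^ N := by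
  have hpd := Bc_posDef U lam hlam σ2 hσ2 S
  have hH : (Matrix.diagonal (fun n => ((σ2 / lam n : ℝ) : ℂ)) + U * (S * Sᴴ) * Uᴴ).IsHermitian :=
    hpd.1
  have heig : ∀ i, 0 ≤ hH.eigenvalues i := hpd.posSemidef.eigenvalues_nonneg
  have hq : 0 < ∏ n, lam n / σ2 := Finset.prod_pos fun n _ => div_pos (hlam n) hσ2
  have hdet : (Matrix.det (Matrix.diagonal (fun n => ((σ2 / lam n : ℝ) : ℂ)) +
      U * (S * Sᴴ) * Uᴴ)).re = ∏ i, hH.eigenvalues i := by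
    rw [hH.det_eq_prod_eigenvalues]
    norm_cast
  have htr : (∑ n, σ2 / lam n) + (Matrix.trace (S * Sᴴ)).re = ∑ i, hH.eigenvalues i := by
    have h1 := trace_eq_sum_eigen hH
    rw [Matrix.trace_add, Matrix.trace_diagonal, Matrix.trace_mul_cycle, hU, Matrix.one_mul,
      ← Complex.ofReal_sum] at h1
    have h2 := congrArg Complex.re h1
    rw [Complex.add_re, Complex.ofReal_re, ← Complex.ofReal_sum, Complex.ofReal_re] at h2
    exact h2
  have hre : (Matrix.det (1 + (σ2 : ℂ)⁻¹ •
      (Sᴴ * (Uᴴ * Matrix.diagonal (fun n => (lam n : ℂ)) * U) * S))).re =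
      (∏ n, lam n / σ2) * (Matrix.det (Matrix.diagonal (fun n => ((σ2 / lam n : ℝ) : ℂ)) +
        U * (S * Sᴴ) * Uᴴ)).re := by
    rw [detX_eq_aux U lam hlam σ2 hσ2 S, Complex.re_ofReal_mul]
  have hdpos : 0 < (Matrix.det (Matrix.diagonal (fun n => ((σ2 / lam n : ℝ) : ℂ)) +
      U * (S * Sᴴ) * Uᴴ)).re := by
    have := (Complex.lt_def.mp hpd.det_pos).1
    simpa using this
  constructor
  · rw [hre]; exact mul_pos hq hdpos
  · rw [hre, htr]
    exact mul_le_mul_of_nonneg_left (hdet ▸ amgm_aux hN _ heig) hq.le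

private lemma EE_diag {N L : ℕ} (hL : N ≤ L) (s : Fin N → ℝ) (hs : ∀ n, 0 ≤ s n) :
    (Matrix.of fun (n : Fin N) (l : Fin L) =>
        if l = Fin.castLE hL n then (Real.sqrt (s n) : ℂ) else 0) *
      (Matrix.of fun (n : Fin N) (l : Fin L) =>
        if l = Fin.castLE hL n then (Real.sqrt (s n) : ℂ) else 0)ᴴ
    = Matrix.diagonal (fun n => ((s n : ℝ) : ℂ)) := by
  ext i j
  rw [Matrix.mul_apply]
  simp only [Matrix.conjTranspose_apply, Matrix.of_apply, apply_ite, star_zero, ite_mul, zero_mul,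
    mul_ite, mul_zero]
  rw [Finset.sum_ite_eq' Finset.univ (Fin.castLE hL j)]
  simp only [Finset.mem_univ, if_true]
  by_cases h : i = j
  · subst h
    simp [Matrix.diagonal_apply_eq, ← Complex.ofReal_mul, Real.mul_self_sqrt (hs i)]
  · have hc : Fin.castLE hL j ≠ Fin.castLE hL i := fun hc => h ((Fin.castLE_injective hL hc).symm)
    simp [Matrix.diagonal_apply_ne _ h, hc]

private lemma detX_achieve {N L : ℕ} (hL : N ≤ L) (U : Matrix (Fin N) (Fin N) ℂ) (hU : Uᴴ * U = 1)
    (lam : Fin N → ℝ) (hlam : ∀ n, 0 < lam n) (σ2 : ℝ) (hσ2 : 0 < σ2)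
    (s : Fin N → ℝ) (hs : ∀ n, 0 ≤ s n) :
    ∃ S : Matrix (Fin N) (Fin L) ℂ,
      (Matrix.trace (S * Sᴴ)).re = ∑ n, s n ∧
      (Matrix.det (1 + (σ2 : ℂ)⁻¹ •
          (Sᴴ * (Uᴴ * Matrix.diagonal (fun n => (lam n : ℂ)) * U) * S))).re =
        (∏ n, lam n / σ2) * ∏ n, (σ2 / lam n + s n) := by
  have hUU' : U * Uᴴ = 1 := mul_eq_one_comm.mp hU
  set E : Matrix (Fin N) (Fin L) ℂ := Matrix.of fun (n : Fin N) (l : Fin L) =>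
    if l = Fin.castLE hL n then (Real.sqrt (s n) : ℂ) else 0 with hE
  have hSS : (Uᴴ * E) * (Uᴴ * E)ᴴ = Uᴴ * Matrix.diagonal (fun n => ((s n : ℝ) : ℂ)) * U := by
    rw [Matrix.conjTranspose_mul, Matrix.conjTranspose_conjTranspose, ← EE_diag hL s hs]
    simp [Matrix.mul_assoc, hE]
  refine ⟨Uᴴ * E, ?_, ?_⟩
  · rw [hSS, Matrix.trace_mul_cycle, hUU', Matrix.one_mul, Matrix.trace_diagonal,
      ← Complex.ofReal_sum, Complex.ofReal_re]
  · have hmid : U * ((Uᴴ * E) * (Uᴴ * E)ᴴ) * Uᴴ = Matrix.diagonal (fun n => ((s n : ℝ) : ℂ)) := by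
      rw [hSS]
      calc U * (Uᴴ * Matrix.diagonal (fun n => ((s n : ℝ) : ℂ)) * U) * Uᴴ
          = (U * Uᴴ) * Matrix.diagonal (fun n => ((s n : ℝ) : ℂ)) * (U * Uᴴ) := by
            simp [Matrix.mul_assoc]
        _ = Matrix.diagonal (fun n => ((s n : ℝ) : ℂ)) := by
            rw [hUU', Matrix.one_mul, Matrix.mul_one]
    rw [detX_eq_aux U lam hlam σ2 hσ2 (Uᴴ * E), hmid, Matrix.diagonal_add,
      Matrix.det_diagonal]
    have h3 : ∀ n : Fin N, ((σ2 / lam n : ℝ) : ℂ) + ((s n : ℝ) : ℂ)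
        = ((σ2 / lam n + s n : ℝ) : ℂ) := by
      intro n; push_cast; ring
    simp_rw [h3, ← Complex.ofReal_prod, ← Complex.ofReal_mul, Complex.ofReal_re]

/-- High-SNR behaviour of the maximum sensing rate: as `p_s → ∞`,
`R_s(p_s) - (NM/L)(log₂ p_s - (1/N) ∑ₙ log₂(N σ² /(L λₙ))) → 0`;
the high-SNR slope is `NM/L` and the power offset is `(1/N) ∑ₙ log₂(N σ²/(L λₙ))`. -/
theorem max_sensing_rate_high_SNR (N L M : ℕ) (hN : 0 < N) (hL : N ≤ L) (hM : N ≤ M)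
    (R : Matrix (Fin N) (Fin N) ℂ) (hR : R.PosDef)
    (U : Matrix (Fin N) (Fin N) ℂ) (hU : Uᴴ * U = 1)
    (lam : Fin N → ℝ) (hlam : ∀ n, 0 < lam n)
    (hRU : R = Uᴴ * Matrix.diagonal (fun n => (lam n : ℂ)) * U)
    (σ2 : ℝ) (hσ2 : 0 < σ2) :
    Tendsto (fun ps : ℝ =>
      sSup {y : ℝ | ∃ S : Matrix (Fin N) (Fin L) ℂ,
          (Matrix.trace (S * Sᴴ)).re ≤ L * ps ∧
          y = (M : ℝ) / L * Real.logb 2 (Matrix.det (1 + (σ2 : ℂ)⁻¹ • (Sᴴ * R * S))).re} -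
        ((N : ℝ) * M / L) *
          (Real.logb 2 ps - (1 / N) * ∑ n, Real.logb 2 (N * σ2 / (L * lam n))))
      atTop (nhds 0) := by
  subst hRU
  have hL0 : 0 < L := hN.trans_le hL
  have hNR : (0 : ℝ) < N := by exact_mod_cast hN
  have hLR : (0 : ℝ) < L := by exact_mod_cast hL0
  set c : ℝ := ∑ n, σ2 / lam n with hc_def
  have : Nonempty (Fin N) := Fin.pos_iff_nonempty.mp hN
  have hc : 0 < c := Finset.sum_pos (fun n _ => div_pos hσ2 (hlam n)) Finset.univ_nonempty
  have hqpos : 0 < ∏ n, lam n / σ2 := Finset.prod_pos fun n _ => div_pos (hlam n) hσ2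
  -- the supremum formula
  have hsup : ∀ ps : ℝ, (N : ℝ) * c ≤ (L : ℝ) * ps →
      sSup {y : ℝ | ∃ S : Matrix (Fin N) (Fin L) ℂ,
          (Matrix.trace (S * Sᴴ)).re ≤ L * ps ∧
          y = (M : ℝ) / L * Real.logb 2 (Matrix.det (1 + (σ2 : ℂ)⁻¹ •
            (Sᴴ * (Uᴴ * Matrix.diagonal (fun n => (lam n : ℂ)) * U) * S))).re}
        = (M : ℝ) / L * Real.logb 2 ((∏ n, lam n / σ2) * (((L : ℝ) * ps + c) / N) ^ N) := by
    intro ps hps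
    apply IsGreatest.csSup_eq
    constructor
    · -- membership: achieved by water-filling
      set s : Fin N → ℝ := fun n => ((L : ℝ) * ps + c) / N - σ2 / lam n with hs_def
      have hs : ∀ n, 0 ≤ s n := by
        intro n
        have h1 : σ2 / lam n ≤ c := Finset.single_le_sum
          (f := fun m => σ2 / lam m) (fun i _ => (div_pos hσ2 (hlam i)).le) (Finset.mem_univ n)
        have h2 : (N : ℝ) * (σ2 / lam n) ≤ (L : ℝ) * ps + c := by nlinarith
        have h3 : σ2 / lam n ≤ ((L : ℝ) * ps + c) / N := by
          rw [le_div_iff₀ hNR]; linarith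
        simp only [hs_def]; linarith
      obtain ⟨S, htr, hdet⟩ := detX_achieve hL U hU lam hlam σ2 hσ2 s hs
      have hsum : ∑ n, s n = (L : ℝ) * ps := by
        simp only [hs_def]
        rw [Finset.sum_sub_distrib, Finset.sum_const, Finset.card_univ, Fintype.card_fin,
          nsmul_eq_mul, ← hc_def]
        field_simp
        ring
      refine ⟨S, ?_, ?_⟩
      · rw [htr, hsum]
      · rw [hdet]
        congr 2
        have h4 : ∀ n : Fin N, σ2 / lam n + s n = ((L : ℝ) * ps + c) / N := by
          intro n; simp only [hs_def]; ring
        rw [Finset.prod_congr rfl fun n _ => h4 n, Finset.prod_const, Finset.card_univ,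
          Fintype.card_fin]
    · -- upper bound
      rintro y ⟨S, hSle, rfl⟩
      have hb := detX_bound hN U hU lam hlam σ2 hσ2 S
      have htnn : 0 ≤ (Matrix.trace (S * Sᴴ)).re :=
        trace_re_nonneg (Matrix.posSemidef_self_mul_conjTranspose S)
      have hML : 0 ≤ (M : ℝ) / L := by positivity
      apply mul_le_mul_of_nonneg_left _ hML
      apply Real.logb_le_logb_of_le one_lt_two hb.1
      refine hb.2.trans ?_
      apply mul_le_mul_of_nonneg_left _ hqpos.le
      apply pow_le_pow_left₀ (by positivity)
      apply div_le_div_of_nonneg_right ?_ hNR.le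
      linarith
  -- limit function
  have hTlim : Tendsto (fun ps : ℝ =>
      ((N : ℝ) * M / L) * Real.logb 2 (((L : ℝ) * ps + c) / ((L : ℝ) * ps)))
      atTop (nhds 0) := by
    have h2 : Tendsto (fun ps : ℝ => 1 + (c / L) / ps) atTop (nhds 1) := by
      have h3 : Tendsto (fun ps : ℝ => (c / L) / ps) atTop (nhds 0) :=
        Tendsto.div_atTop tendsto_const_nhds tendsto_id
      simpa using tendsto_const_nhds.add h3
    have h1 : Tendsto (fun ps : ℝ => ((L : ℝ) * ps + c) / ((L : ℝ) * ps)) atTop (nhds 1) := by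
      apply h2.congr'
      filter_upwards [eventually_gt_atTop (0 : ℝ)] with ps hps
      field_simp
    have h4 := ((Real.continuousAt_logb (b := 2) (one_ne_zero)).tendsto).comp h1
    rw [Real.logb_one] at h4
    simpa using h4.const_mul ((N : ℝ) * M / L)
  apply hTlim.congr'
  symm
  filter_upwards [eventually_ge_atTop (max 1 ((N : ℝ) * c / L))] with ps hps
  have hps1 : (1 : ℝ) ≤ ps := le_trans (le_max_left _ _) hps
  have hps0 : 0 < ps := lt_of_lt_of_le one_pos hps1
  have hcond : (N : ℝ) * c ≤ (L : ℝ) * ps := by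
    have := le_trans (le_max_right _ _) hps
    rw [div_le_iff₀ hLR] at this
    linarith [this]
  rw [hsup ps hcond]
  -- log identity
  have hLps : 0 < (L : ℝ) * ps := mul_pos hLR hps0
  have hLpc : 0 < (L : ℝ) * ps + c := by linarith
  have ha : Real.log 2 ≠ 0 := (Real.log_pos one_lt_two).ne'
  have e1 : Real.log ((∏ n, lam n / σ2) * (((L : ℝ) * ps + c) / N) ^ N)
      = ((∑ n, Real.log (lam n)) - N * Real.log σ2)
        + N * (Real.log ((L : ℝ) * ps + c) - Real.log N) := by
    rw [Real.log_mul hqpos.ne' (by positivity), Real.log_pow,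
      Real.log_div hLpc.ne' hNR.ne',
      Real.log_prod (fun n _ => (div_pos (hlam n) hσ2).ne'),
      Finset.sum_congr rfl (fun n _ => Real.log_div (hlam n).ne' hσ2.ne'),
      Finset.sum_sub_distrib, Finset.sum_const, Finset.card_univ, Fintype.card_fin,
      nsmul_eq_mul]
  have e2 : ∀ n : Fin N, Real.log ((N : ℝ) * σ2 / ((L : ℝ) * lam n))
      = Real.log N + Real.log σ2 - (Real.log L + Real.log (lam n)) := by
    intro n
    rw [Real.log_div (mul_ne_zero hNR.ne' hσ2.ne') (mul_ne_zero hLR.ne' (hlam n).ne'),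
      Real.log_mul hNR.ne' hσ2.ne', Real.log_mul hLR.ne' (hlam n).ne']
  have e3 : Real.log (((L : ℝ) * ps + c) / ((L : ℝ) * ps))
      = Real.log ((L : ℝ) * ps + c) - (Real.log L + Real.log ps) := by
    rw [Real.log_div hLpc.ne' hLps.ne', Real.log_mul hLR.ne' hps0.ne']
  have e4 : (∑ n, Real.log ((N : ℝ) * σ2 / ((L : ℝ) * lam n)) / Real.log 2)
      = ((N : ℝ) * (Real.log N + Real.log σ2) - ((N : ℝ) * Real.log L + ∑ n, Real.log (lam n)))
        / Real.log 2 := by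
    rw [← Finset.sum_div]
    congr 1
    rw [Finset.sum_congr rfl (fun n _ => e2 n)]
    simp only [Finset.sum_sub_distrib, Finset.sum_add_distrib, Finset.sum_const,
      Finset.card_univ, Fintype.card_fin, nsmul_eq_mul]
    ring
  simp only [Real.logb]
  rw [e1, e3, e4]
  field_simp
  ring
end

section
/- The high-SNR asymptotic gap between the sensing rates of S-SIC (noise variance 1) and C-SIC (noise variance σ_c² = 1 + p_c Σ_k α_k) equals (NM/L)·log₂ σ_c² = (NM/L)·log₂(1 + p_c Σ_{k=1}^K α_k) > 0; that is, lim_{p_s→∞} [R_s^s(p_s) − R_s^c(p_s)] = (NM/L)·log₂(1 + p_c Σ_k α_k). -/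
open Matrix Finset Filter
open scoped ComplexOrder

/-! ### Auxiliary lemmas -/

lemma amgm {ι : Type*} (s : Finset ι) (hs : s.Nonempty) (z : ι → ℝ) (hz : ∀ i ∈ s, 0 ≤ z i) :
    ∏ i ∈ s, z i ≤ ((∑ i ∈ s, z i) / s.card) ^ (s.card : ℕ) := by
  have hcard : (0:ℝ) < s.card := by exact_mod_cast hs.card_pos
  have h := Real.geom_mean_le_arith_mean s (fun _ => 1) z (fun i _ => zero_le_one) (by simp [hcard]) hz
  simp only [Real.rpow_one, one_mul, Finset.sum_const, nsmul_eq_mul, mul_one] at h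
  have hp : (0:ℝ) ≤ ∏ i ∈ s, z i := Finset.prod_nonneg hz
  have h2 := Real.rpow_le_rpow (Real.rpow_nonneg hp _) h (le_of_lt hcard)
  rw [← Real.rpow_natCast ((∑ i ∈ s, z i) / s.card) s.card]
  rwa [← Real.rpow_mul hp, inv_mul_cancel₀ (ne_of_gt hcard), Real.rpow_one] at h2

section Spectral

variable {n : Type*} [Fintype n] [DecidableEq n]

lemma trace_eq_sum_eig {A : Matrix n n ℂ} (hA : A.IsHermitian) :
    A.trace = ∑ i, (hA.eigenvalues i : ℂ) := by
  conv_lhs => rw [hA.spectral_theorem, Unitary.conjStarAlgAut_apply]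
  rw [Matrix.trace_mul_cycle]
  have hU : (star (hA.eigenvectorUnitary : Matrix n n ℂ)) * (hA.eigenvectorUnitary : Matrix n n ℂ) = 1 :=
    Matrix.mem_unitaryGroup_iff'.mp (hA.eigenvectorUnitary).2
  rw [hU, Matrix.one_mul, Matrix.trace_diagonal]
  rfl

lemma det_one_add_smul_eig {A : Matrix n n ℂ} (hA : A.IsHermitian) (t : ℝ) :
    Matrix.det (1 + (t : ℂ) • A) = ((∏ i, (1 + t * hA.eigenvalues i) : ℝ) : ℂ) := by
  have hU : (hA.eigenvectorUnitary : Matrix n n ℂ) * star (hA.eigenvectorUnitary : Matrix n n ℂ) = 1 :=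
    Matrix.mem_unitaryGroup_iff.mp (hA.eigenvectorUnitary).2
  have key : 1 + (t : ℂ) • A
      = (hA.eigenvectorUnitary : Matrix n n ℂ) *
        (1 + (t:ℂ) • diagonal (RCLike.ofReal ∘ hA.eigenvalues)) *
        star (hA.eigenvectorUnitary : Matrix n n ℂ) := by
    conv_lhs => rw [hA.spectral_theorem, Unitary.conjStarAlgAut_apply]
    rw [Matrix.mul_add, Matrix.add_mul, Matrix.mul_one, hU]
    rw [Matrix.mul_smul, Matrix.smul_mul]
  rw [key, Matrix.det_mul, Matrix.det_mul,
    mul_comm (Matrix.det _) (Matrix.det (1 + (t:ℂ) • diagonal (RCLike.ofReal ∘ hA.eigenvalues))),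
    mul_assoc, ← Matrix.det_mul, hU, Matrix.det_one, mul_one]
  have hdiag : (1 + (t:ℂ) • diagonal (RCLike.ofReal ∘ hA.eigenvalues))
      = diagonal (fun i => (1 : ℂ) + t * hA.eigenvalues i) := by
    rw [← Matrix.diagonal_one, ← Matrix.diagonal_smul, ← Matrix.diagonal_add]
    congr 1
  rw [hdiag, Matrix.det_diagonal]
  push_cast
  rfl

lemma det_decomp {R : Matrix n n ℂ} (hR : R.PosDef) {l : Type*} [Fintype l] [DecidableEq l]
    (S : Matrix n l ℂ) :
    Matrix.det (1 + Sᴴ * R * S) = R.det * (R⁻¹ + S * Sᴴ).det := by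
  rw [Matrix.mul_assoc, Matrix.det_one_add_mul_comm]
  have h1 : (1 : Matrix n n ℂ) + R * S * Sᴴ = R * (R⁻¹ + S * Sᴴ) := by
    rw [Matrix.mul_add, Matrix.mul_nonsing_inv _ (isUnit_iff_ne_zero.mpr (ne_of_gt hR.det_pos)),
      Matrix.mul_assoc]
  rw [h1, Matrix.det_mul]

lemma posdef_det_re_pos {H : Matrix n n ℂ} (hH : H.PosDef) : 0 < H.det.re :=
  (Complex.lt_def.mp hH.det_pos).1

lemma posdef_det_im {H : Matrix n n ℂ} (hH : H.PosDef) : H.det.im = 0 :=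
  ((Complex.lt_def.mp hH.det_pos).2).symm

lemma posdef_trace_re_eq {H : Matrix n n ℂ} (hH : H.PosDef) :
    H.trace.re = ∑ i, hH.1.eigenvalues i := by
  rw [trace_eq_sum_eig hH.1, ← Complex.ofReal_sum, Complex.ofReal_re]

lemma posdef_det_re_eq {H : Matrix n n ℂ} (hH : H.PosDef) :
    H.det.re = ∏ i, hH.1.eigenvalues i := by
  have h : H.det = ((∏ i, hH.1.eigenvalues i : ℝ) : ℂ) := by
    rw [hH.1.det_eq_prod_eigenvalues]; norm_cast
  rw [h, Complex.ofReal_re]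

lemma posdef_trace_re_pos [Nonempty n] {H : Matrix n n ℂ} (hH : H.PosDef) : 0 < H.trace.re := by
  rw [posdef_trace_re_eq hH]
  exact Finset.sum_pos (fun i _ => hH.eigenvalues_pos i) univ_nonempty

lemma posdef_det_re_le [Nonempty n] {H : Matrix n n ℂ} (hH : H.PosDef) :
    H.det.re ≤ (H.trace.re / (Fintype.card n)) ^ (Fintype.card n) := by
  rw [posdef_det_re_eq hH, posdef_trace_re_eq hH, ← Finset.card_univ]
  exact amgm univ univ_nonempty _ (fun i _ => (hH.eigenvalues_pos i).le)

end Spectral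

section Scaling

variable {n l : Type*} [Fintype n] [Fintype l]

lemma smul_conjT (t : ℝ) (A : Matrix n l ℂ) :
    (((t:ℝ):ℂ) • A)ᴴ = ((t:ℝ):ℂ) • Aᴴ := by
  rw [Matrix.conjTranspose_smul]
  congr 1
  exact Complex.conj_ofReal t

lemma scale_mul_conjT (t : ℝ) (ht : 0 ≤ t) (A : Matrix n l ℂ) :
    (((Real.sqrt t : ℝ):ℂ) • A) * (((Real.sqrt t : ℝ):ℂ) • A)ᴴ = ((t:ℝ):ℂ) • (A * Aᴴ) := by
  rw [smul_conjT, Matrix.smul_mul, Matrix.mul_smul, smul_smul, ← Complex.ofReal_mul,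
    Real.mul_self_sqrt ht]

lemma scale_sandwich [DecidableEq n] (t : ℝ) (ht : 0 ≤ t) (B : Matrix n n ℂ) (A : Matrix n l ℂ) :
    (((Real.sqrt t : ℝ):ℂ) • A)ᴴ * B * (((Real.sqrt t : ℝ):ℂ) • A) = ((t:ℝ):ℂ) • (Aᴴ * B * A) := by
  rw [smul_conjT, Matrix.smul_mul, Matrix.mul_smul, Matrix.smul_mul, smul_smul,
    ← Complex.ofReal_mul, Real.mul_self_sqrt ht]

end Scaling

lemma Emul {N L : ℕ} (hL : N ≤ L) :
    (Matrix.of fun (i : Fin N) (j : Fin L) => if (j:ℕ) = (i:ℕ) then (1:ℂ) else 0) *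
    (Matrix.of fun (i : Fin N) (j : Fin L) => if (j:ℕ) = (i:ℕ) then (1:ℂ) else 0)ᴴ = 1 := by
  ext i i'
  rw [Matrix.one_apply]
  simp only [Matrix.mul_apply, Matrix.conjTranspose_apply, Matrix.of_apply]
  by_cases h : i = i'
  · subst h
    rw [if_pos rfl, Finset.sum_eq_single (Fin.castLE hL i)]
    · simp
    · intro j _ hj
      rw [if_neg (fun hc => hj (Fin.ext (by simpa using hc))), zero_mul]
    · simp
  · rw [if_neg h]
    apply Finset.sum_eq_zero
    intro j _
    rcases eq_or_ne ((j:ℕ)) ((i:ℕ)) with h1 | h1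
    · have h2 : ¬((j:ℕ) = (i':ℕ)) := fun hc => h (Fin.ext (h1.symm.trans hc))
      simp [h1, h2]
      exact fun hc => h (Fin.ext hc)
    · rw [if_neg h1, zero_mul]

/-! ### Limit helpers -/

lemma affine_atTop {b : ℝ} (a : ℝ) (hb : 0 < b) :
    Tendsto (fun x : ℝ => a + b * x) atTop atTop :=
  tendsto_atTop_add_const_left _ a (Tendsto.const_mul_atTop hb tendsto_id)

lemma tendsto_ratio (a b a' b' : ℝ) (hb' : 0 < b') :
    Tendsto (fun x : ℝ => (a + b * x) / (a' + b' * x)) atTop (nhds (b / b')) := by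
  have h1 : Tendsto (fun x : ℝ => (a * x⁻¹ + b) / (a' * x⁻¹ + b')) atTop (nhds (b / b')) := by
    have hnum : Tendsto (fun x : ℝ => a * x⁻¹ + b) atTop (nhds b) := by
      simpa using (tendsto_inv_atTop_zero.const_mul a).add_const b
    have hden : Tendsto (fun x : ℝ => a' * x⁻¹ + b') atTop (nhds b') := by
      simpa using (tendsto_inv_atTop_zero.const_mul a').add_const b'
    exact hnum.div hden (ne_of_gt hb')
  refine h1.congr' ?_
  filter_upwards [eventually_gt_atTop 0] with x hx
  have hx' : x ≠ 0 := ne_of_gt hx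
  have e1 : a * x⁻¹ + b = (a + b * x) * x⁻¹ := by field_simp
  have e2 : a' * x⁻¹ + b' = (a' + b' * x) * x⁻¹ := by field_simp
  rw [e1, e2, mul_div_mul_right _ _ (inv_ne_zero hx')]

lemma tendsto_logb_sub (a b a' b' : ℝ) (hb : 0 < b) (hb' : 0 < b') :
    Tendsto (fun x : ℝ => Real.logb 2 (a + b * x) - Real.logb 2 (a' + b' * x)) atTop
      (nhds (Real.logb 2 (b / b'))) := by
  have hratio := tendsto_ratio a b a' b' hb'
  have hbb' : (0:ℝ) < b / b' := div_pos hb hb'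
  have hlog : Tendsto (fun x : ℝ => Real.log ((a + b * x) / (a' + b' * x))) atTop
      (nhds (Real.log (b / b'))) :=
    (Real.continuousAt_log (ne_of_gt hbb')).tendsto.comp hratio
  have h2 := hlog.div_const (Real.log 2)
  rw [Real.log_div_log] at h2
  refine h2.congr' ?_
  filter_upwards [(affine_atTop a hb).eventually (eventually_gt_atTop 0),
    (affine_atTop a' hb').eventually (eventually_gt_atTop 0)] with x h1x h2x
  rw [← Real.log_div_log, Real.log_div (ne_of_gt h1x) (ne_of_gt h2x), sub_div,
    Real.log_div_log, Real.log_div_log]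

/-! ### The feasible-value sets -/

def Aset (N L M : ℕ) (R : Matrix (Fin N) (Fin N) ℂ) (p : ℝ) : Set ℝ :=
  {y : ℝ | ∃ S : Matrix (Fin N) (Fin L) ℂ,
      (Matrix.trace (S * Sᴴ)).re ≤ L * p ∧
      y = (M : ℝ) / L * Real.logb 2 (Matrix.det (1 + Sᴴ * R * S)).re}

lemma Aset_mem {N L M : ℕ} (hN : 0 < N) (hL : N ≤ L) {R : Matrix (Fin N) (Fin N) ℂ}
    (hR : R.PosDef) (p : ℝ) (hp : 0 ≤ p) :
    ((M:ℝ)/L * ∑ i, Real.logb 2 (1 + ((L:ℝ)*p/N) * hR.1.eigenvalues i)) ∈ Aset N L M R p := by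
  have hNpos : (0:ℝ) < N := by exact_mod_cast hN
  set t : ℝ := (L:ℝ)*p/N with htdef
  have ht : 0 ≤ t := by positivity
  set E : Matrix (Fin N) (Fin L) ℂ :=
    Matrix.of (fun (i : Fin N) (j : Fin L) => if (j:ℕ) = (i:ℕ) then (1:ℂ) else 0) with hEdef
  refine ⟨((Real.sqrt t : ℝ):ℂ) • E, ?_, ?_⟩
  · rw [scale_mul_conjT t ht E, hEdef, Emul hL, Matrix.trace_smul, Matrix.trace_one, smul_eq_mul]
    have : ((t:ℂ) * (Fintype.card (Fin N) : ℂ)).re = t * N := by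
      rw [Fintype.card_fin]; norm_cast
    rw [this]
    refine le_of_eq ?_
    rw [htdef]; field_simp
  · have hSRS := scale_sandwich t ht R E
    rw [hSRS]
    have h2 : (1 : Matrix (Fin L) (Fin L) ℂ) + ((t:ℝ):ℂ) • (Eᴴ*R*E)
        = 1 + Eᴴ * (((t:ℝ):ℂ) • (R*E)) := by
      rw [Matrix.mul_smul, Matrix.mul_assoc]
    rw [h2, Matrix.det_one_add_mul_comm]
    have h3 : (((t:ℝ):ℂ) • (R*E)) * Eᴴ = ((t:ℝ):ℂ) • R := by
      rw [Matrix.smul_mul, Matrix.mul_assoc, hEdef, Emul hL, Matrix.mul_one]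
    rw [h3, det_one_add_smul_eig hR.1 t, Complex.ofReal_re,
      Real.logb_prod _ _ (fun i _ =>
        (add_pos_of_pos_of_nonneg one_pos (mul_nonneg ht (hR.eigenvalues_pos i).le)).ne')]

lemma Aset_ub {N L M : ℕ} (hN : 0 < N) (hL : N ≤ L) {R : Matrix (Fin N) (Fin N) ℂ}
    (hR : R.PosDef) (p : ℝ) :
    ∀ y ∈ Aset N L M R p,
      y ≤ (M:ℝ)/L * ((∑ i, Real.logb 2 (hR.1.eigenvalues i))
        + N * Real.logb 2 (((R⁻¹).trace.re + L*p)/N)) := by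
  haveI : Nonempty (Fin N) := ⟨⟨0, hN⟩⟩
  have hNpos : (0:ℝ) < N := by exact_mod_cast hN
  have hLpos : (0:ℝ) < L := by exact_mod_cast lt_of_lt_of_le hN hL
  rintro y ⟨S, hS, rfl⟩
  have hQ := Matrix.posSemidef_self_mul_conjTranspose S
  have hH : (R⁻¹ + S*Sᴴ).PosDef := (hR.inv).add_posSemidef hQ
  have hdet : (Matrix.det (1 + Sᴴ*R*S)).re = R.det.re * (R⁻¹ + S*Sᴴ).det.re := by
    rw [det_decomp hR S, Complex.mul_re, posdef_det_im hR, zero_mul, sub_zero]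
  have hRre := posdef_det_re_pos hR
  have hHre := posdef_det_re_pos hH
  have htrpos := posdef_trace_re_pos hH
  have htr : (R⁻¹ + S*Sᴴ).trace.re ≤ (R⁻¹).trace.re + L*p := by
    rw [Matrix.trace_add, Complex.add_re]
    exact add_le_add_right hS _
  have hcL : 0 < (R⁻¹).trace.re + (L:ℝ)*p := lt_of_lt_of_le htrpos htr
  have h1 : (R⁻¹ + S*Sᴴ).det.re ≤ (((R⁻¹).trace.re + L*p)/N)^N := by
    refine le_trans (posdef_det_re_le hH) ?_
    rw [Fintype.card_fin]
    exact pow_le_pow_left₀ (le_of_lt (div_pos htrpos hNpos))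
      (by gcongr) N
  have hdetle : (Matrix.det (1 + Sᴴ*R*S)).re ≤ R.det.re * (((R⁻¹).trace.re + L*p)/N)^N := by
    rw [hdet]; exact mul_le_mul_of_nonneg_left h1 hRre.le
  have hdpos : 0 < (Matrix.det (1 + Sᴴ*R*S)).re := by
    rw [hdet]; exact mul_pos hRre hHre
  have hlogle := Real.logb_le_logb_of_le one_lt_two hdpos hdetle
  calc (M:ℝ)/L * Real.logb 2 (Matrix.det (1+Sᴴ*R*S)).re
      ≤ (M:ℝ)/L * Real.logb 2 (R.det.re * (((R⁻¹).trace.re + L*p)/N)^N) :=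
        mul_le_mul_of_nonneg_left hlogle (by positivity)
    _ = (M:ℝ)/L * ((∑ i, Real.logb 2 (hR.1.eigenvalues i))
        + N * Real.logb 2 (((R⁻¹).trace.re + L*p)/N)) := by
        rw [Real.logb_mul hRre.ne' (pow_pos (div_pos hcL hNpos) N).ne', Real.logb_pow,
          posdef_det_re_eq hR, Real.logb_prod _ _ (fun i _ => (hR.eigenvalues_pos i).ne')]

lemma Bset_eq {N L M : ℕ} (R : Matrix (Fin N) (Fin N) ℂ) (s : ℝ) (hs : 0 < s) (ps : ℝ) :
    {y : ℝ | ∃ S : Matrix (Fin N) (Fin L) ℂ,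
        (Matrix.trace (S * Sᴴ)).re ≤ L * ps ∧
        y = (M : ℝ) / L * Real.logb 2
          (Matrix.det (1 + ((s : ℝ) : ℂ)⁻¹ • (Sᴴ * R * S))).re}
      = Aset N L M R (ps / s) := by
  ext y
  simp only [Aset, Set.mem_setOf_eq]
  constructor
  · rintro ⟨S, hS, rfl⟩
    refine ⟨((Real.sqrt s⁻¹ : ℝ):ℂ) • S, ?_, ?_⟩
    · rw [scale_mul_conjT _ (inv_nonneg.mpr hs.le), Matrix.trace_smul, smul_eq_mul,
        Complex.re_ofReal_mul]
      calc s⁻¹ * (Matrix.trace (S*Sᴴ)).re ≤ s⁻¹ * ((L:ℝ)*ps) :=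
            mul_le_mul_of_nonneg_left hS (inv_nonneg.mpr hs.le)
        _ = (L:ℝ)*(ps/s) := by rw [div_eq_mul_inv]; ring
    · rw [scale_sandwich _ (inv_nonneg.mpr hs.le) R S, Complex.ofReal_inv]
  · rintro ⟨S, hS, rfl⟩
    refine ⟨((Real.sqrt s : ℝ):ℂ) • S, ?_, ?_⟩
    · rw [scale_mul_conjT _ hs.le, Matrix.trace_smul, smul_eq_mul, Complex.re_ofReal_mul]
      calc s * (Matrix.trace (S*Sᴴ)).re ≤ s * ((L:ℝ)*(ps/s)) :=
            mul_le_mul_of_nonneg_left hS hs.le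
        _ = (L:ℝ)*ps := by field_simp
    · rw [scale_sandwich _ hs.le R S, smul_smul,
        inv_mul_cancel₀ (Complex.ofReal_ne_zero.mpr hs.ne'), one_smul]

/-- Corollary 1: the high-SNR gap between the maximized sensing rates of S-SIC
(noise variance `1`) and C-SIC (noise variance `σ_c² = 1 + p_c ∑ₖ αₖ`) is
`(NM/L) log₂(1 + p_c ∑ₖ αₖ) > 0`. -/
theorem SSIC_CSIC_sensing_gap (N L M K : ℕ) (hN : 0 < N) (hL : N ≤ L) (hM : N ≤ M)
    (R : Matrix (Fin N) (Fin N) ℂ) (hR : R.PosDef)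
    (pc : ℝ) (hpc : 0 < pc) (α : Fin K → ℝ) (hα : ∀ k, 0 < α k) (hK : 0 < K) :
    (0 : ℝ) < ((N : ℝ) * M / L) * Real.logb 2 (1 + pc * ∑ k, α k) ∧
    Tendsto (fun ps : ℝ =>
      sSup {y : ℝ | ∃ S : Matrix (Fin N) (Fin L) ℂ,
          (Matrix.trace (S * Sᴴ)).re ≤ L * ps ∧
          y = (M : ℝ) / L * Real.logb 2 (Matrix.det (1 + Sᴴ * R * S)).re} -
      sSup {y : ℝ | ∃ S : Matrix (Fin N) (Fin L) ℂ,
          (Matrix.trace (S * Sᴴ)).re ≤ L * ps ∧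
          y = (M : ℝ) / L * Real.logb 2
            (Matrix.det (1 + ((1 + pc * ∑ k, α k : ℝ) : ℂ)⁻¹ • (Sᴴ * R * S))).re})
      atTop (nhds (((N : ℝ) * M / L) * Real.logb 2 (1 + pc * ∑ k, α k))) := by
  have hLpos : (0:ℝ) < L := by exact_mod_cast lt_of_lt_of_le hN hL
  have hNpos : (0:ℝ) < N := by exact_mod_cast hN
  have hMpos : (0:ℝ) < M := by exact_mod_cast lt_of_lt_of_le hN hM
  have hsum : 0 < ∑ k, α k :=
    Finset.sum_pos (fun k _ => hα k) ⟨⟨0, hK⟩, Finset.mem_univ _⟩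
  have hσ2gt : (1:ℝ) < 1 + pc * ∑ k, α k := by nlinarith [mul_pos hpc hsum]
  set σ2 : ℝ := 1 + pc * ∑ k, α k with hσ2def
  have hσ2pos : (0:ℝ) < σ2 := lt_trans one_pos hσ2gt
  refine ⟨mul_pos (div_pos (mul_pos hNpos hMpos) hLpos)
    (Real.logb_pos one_lt_two hσ2gt), ?_⟩
  -- bounds on the supremum
  have hbdd : ∀ p : ℝ, BddAbove (Aset N L M R p) :=
    fun p => ⟨_, fun y hy => Aset_ub hN hL hR p y hy⟩
  have hflow : ∀ p : ℝ, 0 ≤ p →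
      (M:ℝ)/L * ∑ i, Real.logb 2 (1 + ((L:ℝ)*p/N) * hR.1.eigenvalues i)
        ≤ sSup (Aset N L M R p) :=
    fun p hp => le_csSup (hbdd p) (Aset_mem hN hL hR p hp)
  have hfup : ∀ p : ℝ, 0 ≤ p →
      sSup (Aset N L M R p) ≤ (M:ℝ)/L * ((∑ i, Real.logb 2 (hR.1.eigenvalues i))
        + N * Real.logb 2 (((R⁻¹).trace.re + L*p)/N)) :=
    fun p hp => csSup_le ⟨_, Aset_mem hN hL hR p hp⟩ (Aset_ub hN hL hR p)
  -- value of the constant sum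
  have hgval : (M:ℝ)/L * ∑ _i : Fin N, Real.logb 2 σ2 = (N:ℝ)*M/L * Real.logb 2 σ2 := by
    rw [Finset.sum_const, card_univ, Fintype.card_fin, nsmul_eq_mul]; ring
  -- lower squeeze function limit
  have hterm1 : ∀ i : Fin N, Tendsto (fun ps : ℝ =>
      (Real.logb 2 (1 + ((L:ℝ)*ps/N) * hR.1.eigenvalues i)
        - Real.logb 2 (hR.1.eigenvalues i))
      - Real.logb 2 (((R⁻¹).trace.re + (L:ℝ)*(ps/σ2))/N)) atTop
      (nhds (Real.logb 2 σ2)) := by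
    intro i
    have hμi := hR.eigenvalues_pos i
    have hb : (0:ℝ) < (L:ℝ)*hR.1.eigenvalues i/N := by positivity
    have hb' : (0:ℝ) < (L:ℝ)/(σ2*N) := by positivity
    have h := (tendsto_logb_sub 1 ((L:ℝ)*hR.1.eigenvalues i/N) ((R⁻¹).trace.re/N)
      ((L:ℝ)/(σ2*N)) hb hb').sub_const (Real.logb 2 (hR.1.eigenvalues i))
    have hval : Real.logb 2 (((L:ℝ)*hR.1.eigenvalues i/N) / ((L:ℝ)/(σ2*N)))
        - Real.logb 2 (hR.1.eigenvalues i) = Real.logb 2 σ2 := by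
      have e : ((L:ℝ)*hR.1.eigenvalues i/N) / ((L:ℝ)/(σ2*N)) = hR.1.eigenvalues i * σ2 := by
        field_simp
      rw [e, Real.logb_mul hμi.ne' hσ2pos.ne']
      ring
    rw [hval] at h
    refine h.congr fun ps => ?_
    have e1 : 1 + ((L:ℝ)*hR.1.eigenvalues i/N) * ps
        = 1 + ((L:ℝ)*ps/N) * hR.1.eigenvalues i := by ring
    have e2 : (R⁻¹).trace.re/N + ((L:ℝ)/(σ2*N)) * ps
        = ((R⁻¹).trace.re + (L:ℝ)*(ps/σ2))/N := by
      field_simp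
    rw [e1, e2]
    ring
  have limg : Tendsto (fun ps : ℝ =>
      ((M:ℝ)/L * ∑ i, Real.logb 2 (1 + ((L:ℝ)*ps/N) * hR.1.eigenvalues i))
      - ((M:ℝ)/L * ((∑ i, Real.logb 2 (hR.1.eigenvalues i))
          + N * Real.logb 2 (((R⁻¹).trace.re + (L:ℝ)*(ps/σ2))/N)))) atTop
      (nhds ((N:ℝ)*M/L * Real.logb 2 σ2)) := by
    have hsum1 := tendsto_finset_sum (univ : Finset (Fin N)) (fun i _ => hterm1 i)
    have hg := hsum1.const_mul ((M:ℝ)/L)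
    rw [hgval] at hg
    refine hg.congr fun ps => ?_
    rw [Finset.sum_sub_distrib, Finset.sum_sub_distrib, Finset.sum_const, card_univ,
      Fintype.card_fin, nsmul_eq_mul]
    ring
  -- upper squeeze function limit
  have hterm2 : ∀ i : Fin N, Tendsto (fun ps : ℝ =>
      (Real.logb 2 (hR.1.eigenvalues i)
        + Real.logb 2 (((R⁻¹).trace.re + (L:ℝ)*ps)/N))
      - Real.logb 2 (1 + ((L:ℝ)*(ps/σ2)/N) * hR.1.eigenvalues i)) atTop
      (nhds (Real.logb 2 σ2)) := by
    intro i
    have hμi := hR.eigenvalues_pos i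
    have hb : (0:ℝ) < (L:ℝ)/N := by positivity
    have hb' : (0:ℝ) < (L:ℝ)*hR.1.eigenvalues i/(σ2*N) := by positivity
    have h := (tendsto_logb_sub ((R⁻¹).trace.re/N) ((L:ℝ)/N) 1
      ((L:ℝ)*hR.1.eigenvalues i/(σ2*N)) hb hb').const_add (Real.logb 2 (hR.1.eigenvalues i))
    have hval : Real.logb 2 (hR.1.eigenvalues i)
        + Real.logb 2 (((L:ℝ)/N) / ((L:ℝ)*hR.1.eigenvalues i/(σ2*N))) = Real.logb 2 σ2 := by
      have e : ((L:ℝ)/N) / ((L:ℝ)*hR.1.eigenvalues i/(σ2*N)) = σ2/hR.1.eigenvalues i := by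
        field_simp
      rw [e, Real.logb_div hσ2pos.ne' hμi.ne']
      ring
    rw [hval] at h
    refine h.congr fun ps => ?_
    have e1 : (R⁻¹).trace.re/N + ((L:ℝ)/N) * ps = ((R⁻¹).trace.re + (L:ℝ)*ps)/N := by ring
    have e2 : 1 + ((L:ℝ)*hR.1.eigenvalues i/(σ2*N)) * ps
        = 1 + ((L:ℝ)*(ps/σ2)/N) * hR.1.eigenvalues i := by
      field_simp
    rw [e1, e2]
    ring
  have limh : Tendsto (fun ps : ℝ =>
      ((M:ℝ)/L * ((∑ i, Real.logb 2 (hR.1.eigenvalues i))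
          + N * Real.logb 2 (((R⁻¹).trace.re + (L:ℝ)*ps)/N)))
      - ((M:ℝ)/L * ∑ i, Real.logb 2 (1 + ((L:ℝ)*(ps/σ2)/N) * hR.1.eigenvalues i))) atTop
      (nhds ((N:ℝ)*M/L * Real.logb 2 σ2)) := by
    have hsum2 := tendsto_finset_sum (univ : Finset (Fin N)) (fun i _ => hterm2 i)
    have hh := hsum2.const_mul ((M:ℝ)/L)
    rw [hgval] at hh
    refine hh.congr fun ps => ?_
    rw [Finset.sum_sub_distrib, Finset.sum_add_distrib, Finset.sum_const, card_univ,
      Fintype.card_fin, nsmul_eq_mul]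
    ring
  -- assemble
  refine Filter.Tendsto.congr
    (f₁ := fun ps : ℝ => sSup (Aset N L M R ps) - sSup (Aset N L M R (ps/σ2)))
    (fun ps => ?_) ?_
  · rw [Bset_eq R σ2 hσ2pos ps]
    rfl
  · refine tendsto_of_tendsto_of_tendsto_of_le_of_le' limg limh ?_ ?_
    · filter_upwards [eventually_ge_atTop 0] with ps hps
      have h1 := hflow ps hps
      have h2 := hfup (ps/σ2) (div_nonneg hps hσ2pos.le)
      linarith
    · filter_upwards [eventually_ge_atTop 0] with ps hps
      have h1 := hfup ps hps
      have h2 := hflow (ps/σ2) (div_nonneg hps hσ2pos.le)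
      linarith
end

section
/- In FDSAC with bandwidth fraction α ∈ [0,1] for communication, the high-SNR slope of the ergodic communication rate α·E[log₂ det(I + (p_c/α) H H^H)] is αK, and the high-SNR slope of the maximized sensing rate (M(1−α)/L)·max_{tr(SS^H)≤Lp_s} log₂ det(I + S^H R S/(1−α)) is (1−α)NM/L; hence for α ∈ (0,1) both slopes are strictly smaller than the ISAC slopes K and NM/L. -/
open Matrix Finset MeasureTheory Filter
open scoped ComplexOrder ProbabilityTheory

/-- det of `1 + c • B` for Hermitian B, in terms of eigenvalues. -/
lemma detre_one_add_smul {n : ℕ} {B : Matrix (Fin n) (Fin n) ℂ} (hB : B.IsHermitian) (c : ℝ) :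
    (Matrix.det (1 + (c : ℂ) • B)).re = ∏ i, (1 + c * hB.eigenvalues i) := by
  set U : Matrix (Fin n) (Fin n) ℂ := (hB.eigenvectorUnitary : Matrix (Fin n) (Fin n) ℂ) with hUdef
  have hU : U ∈ Matrix.unitaryGroup (Fin n) ℂ := hB.eigenvectorUnitary.2
  set D : Matrix (Fin n) (Fin n) ℂ := Matrix.diagonal (RCLike.ofReal ∘ hB.eigenvalues) with hDdef
  have h1 : (1 : Matrix (Fin n) (Fin n) ℂ) + (c : ℂ) • B = U * (1 + (c : ℂ) • D) * star U := by
    rw [mul_add, add_mul, mul_one, (Matrix.mem_unitaryGroup_iff).mp hU]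
    congr 1
    rw [Matrix.mul_smul, Matrix.smul_mul]
    rw [hUdef, hDdef, ← Unitary.conjStarAlgAut_apply (S := ℂ), ← hB.spectral_theorem]
  have h3 : (1 : Matrix (Fin n) (Fin n) ℂ) + (c : ℂ) • D
      = Matrix.diagonal (fun i => ((1 + c * hB.eigenvalues i : ℝ) : ℂ)) := by
    ext i j
    by_cases h : i = j
    · subst h
      simp only [hDdef, Matrix.add_apply, Matrix.one_apply_eq, Matrix.smul_apply,
        Matrix.diagonal_apply_eq, Function.comp_apply, smul_eq_mul]
      push_cast
      rfl
    · simp [hDdef, Matrix.one_apply, Matrix.diagonal_apply_ne _ h, h]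
  have h2 : Matrix.det (1 + (c : ℂ) • B) = ∏ i, ((1 + c * hB.eigenvalues i : ℝ) : ℂ) := by
    rw [h1, Matrix.det_mul_right_comm, (Matrix.mem_unitaryGroup_iff).mp hU, one_mul, h3,
      Matrix.det_diagonal]
  rw [h2, ← Complex.ofReal_prod]
  exact Complex.ofReal_re _

/-- trace of a Hermitian matrix is the sum of eigenvalues. -/
lemma trace_re_eq_sum {n : ℕ} {B : Matrix (Fin n) (Fin n) ℂ} (hB : B.IsHermitian) :
    (Matrix.trace B).re = ∑ i, hB.eigenvalues i := by
  conv_lhs => rw [hB.spectral_theorem, Unitary.conjStarAlgAut_apply]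
  rw [Matrix.trace_mul_comm, ← Matrix.mul_assoc,
    (Matrix.mem_unitaryGroup_iff').mp hB.eigenvectorUnitary.2, one_mul, Matrix.trace_diagonal]
  simp [Complex.re_sum, Function.comp]
lemma normSq_sum_mul_le {n : ℕ} (a b : Fin n → ℂ) :
    Complex.normSq (∑ j, a j * b j) ≤ (∑ j, Complex.normSq (a j)) * ∑ j, Complex.normSq (b j) := by
  have h1 : ‖∑ j, a j * b j‖ ≤ ∑ j, ‖a j‖ * ‖b j‖ := by
    refine (norm_sum_le _ _).trans_eq ?_
    simp [norm_mul]
  have h2 := Finset.sum_mul_sq_le_sq_mul_sq Finset.univ (fun j => ‖a j‖)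
    (fun j => ‖b j‖)
  calc Complex.normSq (∑ j, a j * b j) = (‖∑ j, a j * b j‖) ^ 2 :=
        (Complex.sq_norm _).symm
    _ ≤ (∑ j, ‖a j‖ * ‖b j‖) ^ 2 := by
        exact pow_le_pow_left₀ (norm_nonneg _) h1 2
    _ ≤ (∑ j, (‖a j‖) ^ 2) * ∑ j, (‖b j‖) ^ 2 := h2
    _ = _ := by simp [Complex.sq_norm]

lemma trace_self_mul_conjTranspose_re {m l : ℕ} (A : Matrix (Fin m) (Fin l) ℂ) :
    (Matrix.trace (A * Aᴴ)).re = ∑ i, ∑ j, Complex.normSq (A i j) := by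
  simp [Matrix.trace, Matrix.diag, Matrix.mul_apply, Matrix.conjTranspose_apply,
    Complex.re_sum, Complex.mul_conj, ← Complex.ofReal_sum]

lemma trace_mul_sq_bound {n l : ℕ} (W : Matrix (Fin n) (Fin n) ℂ) (S : Matrix (Fin n) (Fin l) ℂ) :
    (Matrix.trace ((W * S) * (W * S)ᴴ)).re
      ≤ (Matrix.trace (W * Wᴴ)).re * (Matrix.trace (S * Sᴴ)).re := by
  rw [trace_self_mul_conjTranspose_re, trace_self_mul_conjTranspose_re,
    trace_self_mul_conjTranspose_re]
  calc ∑ i, ∑ j, Complex.normSq ((W * S) i j)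
      ≤ ∑ i, ∑ j, (∑ k, Complex.normSq (W i k)) * (∑ k, Complex.normSq (S k j)) := by
        refine Finset.sum_le_sum fun i _ => Finset.sum_le_sum fun j _ => ?_
        rw [Matrix.mul_apply]
        exact normSq_sum_mul_le _ _
    _ = (∑ i, ∑ k, Complex.normSq (W i k)) * ∑ j, ∑ k, Complex.normSq (S k j) :=
        (Finset.sum_mul_sum _ _ _ _).symm
    _ = (∑ i, ∑ k, Complex.normSq (W i k)) * ∑ k, ∑ j, Complex.normSq (S k j) := by
        congr 1
        exact Finset.sum_comm

lemma det_one_add_smul_mul {m n : ℕ} (c : ℂ) (A : Matrix (Fin m) (Fin n) ℂ)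
    (B : Matrix (Fin n) (Fin m) ℂ) :
    Matrix.det (1 + c • (A * B)) = Matrix.det (1 + c • (B * A)) := by
  have h1 : (1 : Matrix (Fin m) (Fin m) ℂ) + c • (A * B) = 1 + A * (c • B) := by
    rw [Matrix.mul_smul]
  have h2 : (1 : Matrix (Fin n) (Fin n) ℂ) + c • (B * A) = 1 + (c • B) * A := by
    rw [Matrix.smul_mul]
  rw [h1, h2, Matrix.det_one_add_mul_comm]

lemma logb_prod' {n : ℕ} (f : Fin n → ℝ) (hf : ∀ i, f i ≠ 0) :
    Real.logb 2 (∏ i, f i) = ∑ i, Real.logb 2 (f i) := by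
  simp only [Real.logb, Real.log_prod (fun i _ => hf i), Finset.sum_div]

lemma slope_lim {f : ℝ → ℝ} {a c₁ c₂ : ℝ}
    (h : ∀ᶠ p in atTop, a * Real.logb 2 p + c₁ ≤ f p ∧ f p ≤ a * Real.logb 2 p + c₂) :
    Tendsto (fun p => f p / Real.logb 2 p) atTop (nhds a) := by
  have hlog : Tendsto (fun p : ℝ => Real.logb 2 p) atTop atTop :=
    Real.tendsto_logb_atTop (by norm_num)
  have h₁ : Tendsto (fun p : ℝ => a + c₁ / Real.logb 2 p) atTop (nhds a) := by
    simpa using tendsto_const_nhds.add ((tendsto_const_nhds (x := c₁)).div_atTop hlog)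
  have h₂ : Tendsto (fun p : ℝ => a + c₂ / Real.logb 2 p) atTop (nhds a) := by
    simpa using tendsto_const_nhds.add ((tendsto_const_nhds (x := c₂)).div_atTop hlog)
  refine tendsto_of_tendsto_of_tendsto_of_le_of_le' h₁ h₂ ?_ ?_
  · filter_upwards [h, hlog.eventually_gt_atTop 0] with p hp hpos
    rw [le_div_iff₀ hpos]
    calc (a + c₁ / Real.logb 2 p) * Real.logb 2 p = a * Real.logb 2 p + c₁ := by
          field_simp
      _ ≤ f p := hp.1
  · filter_upwards [h, hlog.eventually_gt_atTop 0] with p hp hpos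
    rw [div_le_iff₀ hpos]
    calc f p ≤ a * Real.logb 2 p + c₂ := hp.2
      _ = (a + c₂ / Real.logb 2 p) * Real.logb 2 p := by field_simp

lemma prod_logb_lb {n : ℕ} (μ : Fin n → ℝ) (hμ : ∀ i, 0 < μ i) {d : ℝ} (hd : 0 < d) :
    (n : ℝ) * Real.logb 2 d + Real.logb 2 (∏ i, μ i)
      ≤ Real.logb 2 (∏ i, (1 + d * μ i)) := by
  have hfac : ∀ i, (0:ℝ) < 1 + d * μ i := fun i => by nlinarith [hμ i]
  rw [logb_prod' _ (fun i => (hfac i).ne'), logb_prod' _ (fun i => (hμ i).ne')]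
  have hsum : ∑ _i : Fin n, Real.logb 2 d = (n : ℝ) * Real.logb 2 d := by
    simp [Finset.sum_const, Finset.card_univ, nsmul_eq_mul]
  rw [← hsum, ← Finset.sum_add_distrib]
  refine Finset.sum_le_sum fun i _ => ?_
  rw [← Real.logb_mul hd.ne' (hμ i).ne']
  exact Real.logb_le_logb_of_le (by norm_num) (mul_pos hd (hμ i)) (by nlinarith [hμ i])

lemma prod_logb_ub {n : ℕ} (μ : Fin n → ℝ) (hμ : ∀ i, 0 < μ i) {d : ℝ} (hd : 1 ≤ d) :
    Real.logb 2 (∏ i, (1 + d * μ i))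
      ≤ (n : ℝ) * Real.logb 2 d + Real.logb 2 (∏ i, (1 + μ i)) := by
  have hd0 : (0:ℝ) < d := lt_of_lt_of_le one_pos hd
  have hfac : ∀ i, (0:ℝ) < 1 + d * μ i := fun i => by nlinarith [hμ i]
  have hfac1 : ∀ i, (0:ℝ) < 1 + μ i := fun i => by nlinarith [hμ i]
  rw [logb_prod' _ (fun i => (hfac i).ne'), logb_prod' _ (fun i => (hfac1 i).ne')]
  have hsum : ∑ _i : Fin n, Real.logb 2 d = (n : ℝ) * Real.logb 2 d := by
    simp [Finset.sum_const, Finset.card_univ, nsmul_eq_mul]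
  rw [← hsum, ← Finset.sum_add_distrib]
  refine Finset.sum_le_sum fun i _ => ?_
  rw [← Real.logb_mul hd0.ne' (hfac1 i).ne']
  exact Real.logb_le_logb_of_le (by norm_num) (hfac i) (by nlinarith [hμ i])

lemma eig_le_trace {n : ℕ} {X : Matrix (Fin n) (Fin n) ℂ} (hX : X.PosSemidef) (i : Fin n) :
    hX.1.eigenvalues i ≤ (Matrix.trace X).re := by
  rw [trace_re_eq_sum hX.1]
  exact Finset.single_le_sum (fun j _ => hX.eigenvalues_nonneg j) (Finset.mem_univ i)

lemma detre_eq_prod {n : ℕ} {B : Matrix (Fin n) (Fin n) ℂ} (hB : B.IsHermitian) :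
    (Matrix.det B).re = ∏ i, hB.eigenvalues i := by
  rw [hB.det_eq_prod_eigenvalues, ← RCLike.ofReal_prod]
  exact Complex.ofReal_re _

lemma comm_sandwich {M K : ℕ} (A : Matrix (Fin M) (Fin K) ℂ) (hA : A.rank = K)
    {c : ℝ} (hc : 1 ≤ c) :
    ((K : ℝ) * Real.logb 2 c + Real.logb 2 (Matrix.det (Aᴴ * A)).re
      ≤ Real.logb 2 (Matrix.det (1 + (c : ℂ) • (A * Aᴴ))).re) ∧
    (Real.logb 2 (Matrix.det (1 + (c : ℂ) • (A * Aᴴ))).re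
      ≤ (K : ℝ) * Real.logb 2 c
        + Real.logb 2 (Matrix.det (1 + ((1 : ℝ) : ℂ) • (A * Aᴴ))).re) := by
  have hBpsd : (Aᴴ * A).PosSemidef := Matrix.posSemidef_conjTranspose_mul_self A
  have hrank : (Aᴴ * A).rank = K := by rw [Matrix.rank_conjTranspose_mul_self, hA]
  have hμpos : ∀ i, 0 < hBpsd.1.eigenvalues i := by
    intro i
    rcases (hBpsd.eigenvalues_nonneg i).lt_or_eq with h | h
    · exact h
    · exfalso
      have hcard := hBpsd.1.rank_eq_card_non_zero_eigs
      rw [hrank] at hcard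
      have hlt : Fintype.card {j // hBpsd.1.eigenvalues j ≠ 0} < Fintype.card (Fin K) :=
        Fintype.card_subtype_lt (x := i) (by simp [← h])
      rw [Fintype.card_fin] at hlt
      omega
  have hc0 : (0:ℝ) < c := lt_of_lt_of_le one_pos hc
  have hswap : ∀ d : ℝ, (Matrix.det (1 + (d : ℂ) • (A * Aᴴ))).re
      = ∏ i, (1 + d * hBpsd.1.eigenvalues i) := by
    intro d
    rw [det_one_add_smul_mul (d : ℂ) A Aᴴ]
    exact detre_one_add_smul hBpsd.1 d
  constructor
  · rw [hswap c, detre_eq_prod hBpsd.1]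
    exact prod_logb_lb _ hμpos hc0
  · have h1 : (Matrix.det (1 + ((1:ℝ) : ℂ) • (A * Aᴴ))).re
        = ∏ i, (1 + hBpsd.1.eigenvalues i) := by
      rw [hswap 1]
      simp
    rw [hswap c, h1]
    exact prod_logb_ub _ hμpos hc

lemma trace_re_nonneg_s17 {n m : ℕ} (S : Matrix (Fin n) (Fin m) ℂ) :
    0 ≤ (Matrix.trace (S * Sᴴ)).re := by
  rw [trace_self_mul_conjTranspose_re]
  exact Finset.sum_nonneg fun i _ => Finset.sum_nonneg fun j _ => Complex.normSq_nonneg _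

lemma sensing_ub {N L : ℕ} {R : Matrix (Fin N) (Fin N) ℂ} (hR : R.PosDef)
    {c₀ t : ℝ} (hc₀ : 0 ≤ c₀) (S : Matrix (Fin N) (Fin L) ℂ)
    (hS : (Matrix.trace (S * Sᴴ)).re ≤ t) :
    Real.logb 2 (Matrix.det (1 + ((c₀ : ℝ) : ℂ) • (Sᴴ * R * S))).re
      ≤ (N : ℝ) * Real.logb 2 (1 + c₀ * ((Matrix.trace R).re * t)) := by
  set W := (open scoped MatrixOrder in CFC.sqrt R) with hWdef
  have hWW : W * W = R := by
    open scoped MatrixOrder in exact CFC.sqrt_mul_sqrt_self R hR.posSemidef.nonneg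
  have hWh : W.IsHermitian := by
    open scoped MatrixOrder in exact (CFC.sqrt_nonneg R).posSemidef.1
  have h1 : Matrix.det (1 + (c₀ : ℂ) • (Sᴴ * R * S))
      = Matrix.det (1 + (c₀ : ℂ) • ((W * S) * (W * S)ᴴ)) := by
    have e1 : Sᴴ * R * S = Sᴴ * (R * S) := Matrix.mul_assoc _ _ _
    have e2 : (R * S) * Sᴴ = W * (W * S * Sᴴ) := by
      rw [← hWW]; simp only [Matrix.mul_assoc]
    have e3 : (W * S * Sᴴ) * W = (W * S) * (W * S)ᴴ := by
      rw [Matrix.conjTranspose_mul, hWh.eq]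
      simp only [Matrix.mul_assoc]
    rw [e1, det_one_add_smul_mul, e2, det_one_add_smul_mul, e3]
  have hXpsd : ((W * S) * (W * S)ᴴ).PosSemidef := Matrix.posSemidef_self_mul_conjTranspose _
  have hRtr : 0 ≤ (Matrix.trace R).re := by
    rw [trace_re_eq_sum hR.1]
    exact Finset.sum_nonneg fun i _ => (hR.eigenvalues_pos i).le
  have htr : (Matrix.trace ((W * S) * (W * S)ᴴ)).re ≤ (Matrix.trace R).re * t := by
    refine (trace_mul_sq_bound W S).trans ?_
    have hww : (Matrix.trace (W * Wᴴ)).re = (Matrix.trace R).re := by rw [hWh.eq, hWW]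
    rw [hww]
    exact mul_le_mul_of_nonneg_left hS hRtr
  have hb : ∀ i, 1 + c₀ * hXpsd.1.eigenvalues i ≤ 1 + c₀ * ((Matrix.trace R).re * t) := by
    intro i
    have h := (eig_le_trace hXpsd i).trans htr
    nlinarith
  have hfacpos : ∀ i, (0:ℝ) < 1 + c₀ * hXpsd.1.eigenvalues i := by
    intro i
    have := hXpsd.eigenvalues_nonneg i
    nlinarith
  have hprod : (Matrix.det (1 + (c₀ : ℂ) • ((W * S) * (W * S)ᴴ))).re
      ≤ (1 + c₀ * ((Matrix.trace R).re * t)) ^ N := by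
    rw [detre_one_add_smul hXpsd.1 c₀]
    calc ∏ i, (1 + c₀ * hXpsd.1.eigenvalues i)
        ≤ ∏ _i : Fin N, (1 + c₀ * ((Matrix.trace R).re * t)) :=
          Finset.prod_le_prod (fun i _ => (hfacpos i).le) (fun i _ => hb i)
      _ = (1 + c₀ * ((Matrix.trace R).re * t)) ^ N := by
          simp [Finset.prod_const, Finset.card_univ]
  have hdpos : 0 < (Matrix.det (1 + (c₀ : ℂ) • ((W * S) * (W * S)ᴴ))).re := by
    rw [detre_one_add_smul hXpsd.1 c₀]
    exact Finset.prod_pos fun i _ => hfacpos i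
  rw [h1]
  refine (Real.logb_le_logb_of_le (by norm_num) hdpos hprod).trans ?_
  rw [Real.logb_pow]

lemma exists_good_S {N L : ℕ} (hNL : N ≤ L) (R : Matrix (Fin N) (Fin N) ℂ)
    {c₀ ps : ℝ} (hps : 0 ≤ ps) :
    ∃ S : Matrix (Fin N) (Fin L) ℂ, (Matrix.trace (S * Sᴴ)).re ≤ L * ps ∧
      Matrix.det (1 + ((c₀ : ℝ) : ℂ) • (Sᴴ * R * S))
        = Matrix.det (1 + ((c₀ * ps : ℝ) : ℂ) • R) := by
  set E : Matrix (Fin N) (Fin L) ℂ :=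
    Matrix.of (fun i l => if l = Fin.castLE hNL i then (1:ℂ) else 0) with hE
  have hEE : E * Eᴴ = 1 := by
    ext i j
    rw [Matrix.mul_apply, Matrix.one_apply]
    simp only [hE, Matrix.conjTranspose_apply, Matrix.of_apply, apply_ite (star : ℂ → ℂ),
      star_one, star_zero, ite_mul, one_mul, zero_mul]
    rw [Finset.sum_ite_eq' Finset.univ (Fin.castLE hNL i)
      (fun l => if l = Fin.castLE hNL j then (1:ℂ) else 0)]
    simp [Fin.castLE_inj, eq_comm]
  refine ⟨(Real.sqrt ps : ℂ) • E, ?_, ?_⟩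
  · have hs : ((Real.sqrt ps : ℂ) • E) * ((Real.sqrt ps : ℂ) • E)ᴴ = ((ps : ℝ) : ℂ) • 1 := by
      rw [Matrix.conjTranspose_smul, Matrix.smul_mul, Matrix.mul_smul, hEE, smul_smul]
      congr 1
      rw [Complex.star_def, Complex.conj_ofReal, ← Complex.ofReal_mul,
        Real.mul_self_sqrt hps]
    rw [hs, Matrix.trace_smul, Matrix.trace_one]
    simp only [smul_eq_mul]
    rw [← Complex.ofReal_natCast, ← Complex.ofReal_mul]
    rw [Complex.ofReal_re]
    have hNLr : (N:ℝ) ≤ (L:ℝ) := Nat.cast_le.mpr hNL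
    rw [Fintype.card_fin]
    nlinarith
  · have hs2 : ((Real.sqrt ps : ℂ) • E)ᴴ * R * ((Real.sqrt ps : ℂ) • E)
        = ((ps : ℝ) : ℂ) • (Eᴴ * R * E) := by
      rw [Matrix.conjTranspose_smul, Matrix.smul_mul, Matrix.mul_smul, Matrix.smul_mul,
        smul_smul]
      congr 1
      rw [Complex.star_def, Complex.conj_ofReal, ← Complex.ofReal_mul,
        Real.mul_self_sqrt hps]
    rw [hs2, smul_smul, ← Complex.ofReal_mul]
    have e1 : Eᴴ * R * E = Eᴴ * (R * E) := Matrix.mul_assoc _ _ _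
    rw [e1, det_one_add_smul_mul, Matrix.mul_assoc, hEE, Matrix.mul_one]

/-- Corollary 8 / Remark 12: in FDSAC with bandwidth fraction `α ∈ (0,1)`, the high-SNR
slope of the ergodic communication rate `α E[log₂ det(I + (p_c/α) H Hᴴ)]` is `α K`, the
high-SNR slope of the maximized sensing rate
`(M(1-α)/L) max_{tr(SSᴴ) ≤ L p_s} log₂ det(I + Sᴴ R S/(1-α))` is `(1-α) N M / L`,
and both are strictly smaller than the corresponding ISAC slopes `K` and `N M / L`. -/
theorem fdsac_high_SNR_slopes
    {Ω : Type*} [MeasureSpace Ω] [IsProbabilityMeasure (ℙ : Measure Ω)]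
    (M K N L : ℕ) (hK : 0 < K) (hMK : K ≤ M) (hN : 0 < N) (hNL : N ≤ L)
    (α : ℝ) (hα0 : 0 < α) (hα1 : α < 1)
    (R : Matrix (Fin N) (Fin N) ℂ) (hR : R.PosDef)
    (H : Ω → Matrix (Fin M) (Fin K) ℂ)
    (hmeas : ∀ m k, Measurable fun ω => H ω m k)
    (hrank : ∀ᵐ ω, (H ω).rank = K)
    (hint : Integrable (fun ω => Real.log (Matrix.det ((H ω)ᴴ * H ω)).re))
    (hint' : ∀ p : ℝ, 0 < p → Integrable (fun ω =>
      Real.logb 2 (Matrix.det (1 + ((p / α : ℝ) : ℂ) • (H ω * (H ω)ᴴ))).re)) :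
    Tendsto (fun pc : ℝ =>
        (α * ∫ ω, Real.logb 2
            (Matrix.det (1 + ((pc / α : ℝ) : ℂ) • (H ω * (H ω)ᴴ))).re) /
          Real.logb 2 pc)
      atTop (nhds (α * K)) ∧
    Tendsto (fun ps : ℝ =>
        ((M : ℝ) * (1 - α) / L *
          sSup {y : ℝ | ∃ S : Matrix (Fin N) (Fin L) ℂ,
            (Matrix.trace (S * Sᴴ)).re ≤ L * ps ∧
            y = Real.logb 2
              (Matrix.det (1 + ((1 - α : ℝ) : ℂ)⁻¹ • (Sᴴ * R * S))).re}) /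
          Real.logb 2 ps)
      atTop (nhds ((1 - α) * N * M / L)) ∧
    α * K < (K : ℝ) ∧ (1 - α) * N * M / L < (N : ℝ) * M / L := by
  have hM : 0 < M := lt_of_lt_of_le hK hMK
  have hL : 0 < L := lt_of_lt_of_le hN hNL
  have h1α : (0:ℝ) < 1 - α := by linarith
  have hLr : (0:ℝ) < (L:ℝ) := by exact_mod_cast hL
  have hMr : (0:ℝ) < (M:ℝ) := by exact_mod_cast hM
  have hNr : (0:ℝ) < (N:ℝ) := by exact_mod_cast hN
  refine ⟨?_, ?_, ?_, ?_⟩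
  · -- communication slope
    set a₁ := ∫ ω, Real.logb 2 (Matrix.det ((H ω)ᴴ * H ω)).re with ha₁
    set a₂ := ∫ ω, Real.logb 2 (Matrix.det (1 + ((1:ℝ):ℂ) • (H ω * (H ω)ᴴ))).re with ha₂
    have hlbint : Integrable (fun ω => Real.logb 2 (Matrix.det ((H ω)ᴴ * H ω)).re) := by
      simpa [Real.logb] using hint.div_const (Real.log 2)
    have hubint : Integrable
        (fun ω => Real.logb 2 (Matrix.det (1 + ((1:ℝ):ℂ) • (H ω * (H ω)ᴴ))).re) := by
      have h := hint' α hα0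
      simpa [div_self hα0.ne'] using h
    refine slope_lim (a := α * K) (c₁ := α * (a₁ - K * Real.logb 2 α))
      (c₂ := α * (a₂ - K * Real.logb 2 α)) ?_
    filter_upwards [eventually_ge_atTop (max α 1)] with p hp
    have hp1 : (1:ℝ) ≤ p := le_trans (le_max_right _ _) hp
    have hpα : α ≤ p := le_trans (le_max_left _ _) hp
    have hp0 : (0:ℝ) < p := lt_of_lt_of_le one_pos hp1
    have hc : (1:ℝ) ≤ p / α := (one_le_div hα0).mpr hpα
    have hmid : Integrable (fun ω =>
        Real.logb 2 (Matrix.det (1 + ((p / α : ℝ) : ℂ) • (H ω * (H ω)ᴴ))).re) :=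
      hint' p hp0
    have hae₁ : (fun ω => (K:ℝ) * Real.logb 2 (p/α)
          + Real.logb 2 (Matrix.det ((H ω)ᴴ * H ω)).re)
        ≤ᵐ[ℙ] fun ω =>
          Real.logb 2 (Matrix.det (1 + ((p / α : ℝ) : ℂ) • (H ω * (H ω)ᴴ))).re := by
      filter_upwards [hrank] with ω hω
      exact (comm_sandwich (H ω) hω hc).1
    have hae₂ : (fun ω =>
          Real.logb 2 (Matrix.det (1 + ((p / α : ℝ) : ℂ) • (H ω * (H ω)ᴴ))).re)
        ≤ᵐ[ℙ] fun ω => (K:ℝ) * Real.logb 2 (p/α)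
          + Real.logb 2 (Matrix.det (1 + ((1:ℝ):ℂ) • (H ω * (H ω)ᴴ))).re := by
      filter_upwards [hrank] with ω hω
      exact (comm_sandwich (H ω) hω hc).2
    have hI₁ := integral_mono_ae ((integrable_const _).add hlbint) hmid hae₁
    have hI₂ := integral_mono_ae hmid ((integrable_const _).add hubint) hae₂
    simp only [Pi.add_apply] at hI₁ hI₂
    rw [integral_add (integrable_const _) hlbint, integral_const] at hI₁
    rw [integral_add (integrable_const _) hubint, integral_const] at hI₂
    simp only [measure_univ, probReal_univ, ENNReal.toReal_one, smul_eq_mul, one_mul, one_smul] at hI₁ hI₂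
    have hlogdiv : Real.logb 2 (p / α) = Real.logb 2 p - Real.logb 2 α :=
      Real.logb_div hp0.ne' hα0.ne'
    constructor
    · have h2 := mul_le_mul_of_nonneg_left hI₁ hα0.le
      rw [hlogdiv] at h2
      have h3 : α * (K:ℝ) * Real.logb 2 p + α * (a₁ - K * Real.logb 2 α)
          = α * ((K:ℝ) * (Real.logb 2 p - Real.logb 2 α) + a₁) := by ring
      rw [h3]
      exact h2
    · have h2 := mul_le_mul_of_nonneg_left hI₂ hα0.le
      rw [hlogdiv] at h2
      have h3 : α * (K:ℝ) * Real.logb 2 p + α * (a₂ - K * Real.logb 2 α)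
          = α * ((K:ℝ) * (Real.logb 2 p - Real.logb 2 α) + a₂) := by ring
      rw [h3]
      exact h2
  · -- sensing slope
    have hRtrpos : 0 < (Matrix.trace R).re := by
      haveI : Nonempty (Fin N) := Fin.pos_iff_nonempty.mp hN
      rw [trace_re_eq_sum hR.1]
      exact Finset.sum_pos (fun i _ => hR.eigenvalues_pos i) Finset.univ_nonempty
    have hdRpos : 0 < (Matrix.det R).re := by
      rw [detre_eq_prod hR.1]
      exact Finset.prod_pos fun i _ => hR.eigenvalues_pos i
    have hc₀pos : (0:ℝ) < (1-α)⁻¹ := inv_pos.mpr h1α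
    set C : ℝ := (1-α)⁻¹ * ((Matrix.trace R).re * (L:ℝ)) with hC
    have hCpos : 0 < C := by positivity
    set κ : ℝ := (M:ℝ) * (1-α) / (L:ℝ) with hκ
    have hκpos : 0 < κ := by positivity
    rw [show (1-α) * (N:ℝ) * (M:ℝ) / (L:ℝ) = κ * (N:ℝ) from by rw [hκ]; ring]
    refine slope_lim (a := κ * N)
      (c₁ := κ * ((N:ℝ) * Real.logb 2 (1-α)⁻¹ + Real.logb 2 (Matrix.det R).re))
      (c₂ := κ * ((N:ℝ) * Real.logb 2 (1 + C))) ?_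
    filter_upwards [eventually_ge_atTop 1] with ps hps1
    have hps0 : (0:ℝ) ≤ ps := le_trans zero_le_one hps1
    have hpspos : (0:ℝ) < ps := lt_of_lt_of_le one_pos hps1
    obtain ⟨S₀, hS₀tr, hS₀det⟩ := exists_good_S hNL R (c₀ := (1-α)⁻¹) hps0
    set T : Set ℝ := {y : ℝ | ∃ S : Matrix (Fin N) (Fin L) ℂ,
        (Matrix.trace (S * Sᴴ)).re ≤ L * ps ∧
        y = Real.logb 2 (Matrix.det (1 + ((1 - α : ℝ) : ℂ)⁻¹ • (Sᴴ * R * S))).re} with hT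
    have hcoerce : ((1 - α : ℝ) : ℂ)⁻¹ = (((1-α)⁻¹ : ℝ) : ℂ) := (Complex.ofReal_inv _).symm
    have hmem : Real.logb 2 (Matrix.det (1 + (((1-α)⁻¹ * ps : ℝ) : ℂ) • R)).re ∈ T := by
      exact ⟨S₀, hS₀tr, by rw [hcoerce, hS₀det]⟩
    have hub : ∀ y ∈ T, y ≤ (N:ℝ) * Real.logb 2 (1 + C * ps) := by
      rintro y ⟨S, hStr, rfl⟩
      rw [hcoerce]
      have h := sensing_ub hR hc₀pos.le S hStr
      refine h.trans (le_of_eq ?_)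
      rw [hC]; ring_nf
    have hbdd : BddAbove T := ⟨(N:ℝ) * Real.logb 2 (1 + C * ps), fun y hy => hub y hy⟩
    have hsup_ub : sSup T ≤ (N:ℝ) * Real.logb 2 (1 + C * ps) :=
      Real.sSup_le (fun y hy => hub y hy)
        (mul_nonneg hNr.le (Real.logb_nonneg (by norm_num) (by nlinarith)))
    have hsup_lb : Real.logb 2 (Matrix.det (1 + (((1-α)⁻¹ * ps : ℝ) : ℂ) • R)).re ≤ sSup T :=
      le_csSup hbdd hmem
    have hdpos : (0:ℝ) < (1-α)⁻¹ * ps := by positivity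
    have hlb2 : (N:ℝ) * Real.logb 2 ((1-α)⁻¹ * ps) + Real.logb 2 (Matrix.det R).re
        ≤ Real.logb 2 (Matrix.det (1 + (((1-α)⁻¹ * ps : ℝ) : ℂ) • R)).re := by
      rw [detre_one_add_smul hR.1, detre_eq_prod hR.1]
      exact prod_logb_lb _ hR.eigenvalues_pos hdpos
    have hlogmul : Real.logb 2 ((1-α)⁻¹ * ps)
        = Real.logb 2 (1-α)⁻¹ + Real.logb 2 ps :=
      Real.logb_mul hc₀pos.ne' hpspos.ne'
    have hub2 : (N:ℝ) * Real.logb 2 (1 + C * ps)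
        ≤ (N:ℝ) * (Real.logb 2 (1 + C) + Real.logb 2 ps) := by
      refine mul_le_mul_of_nonneg_left ?_ hNr.le
      rw [← Real.logb_mul (by positivity) hpspos.ne']
      refine Real.logb_le_logb_of_le (by norm_num) (by positivity) ?_
      nlinarith
    constructor
    · have h := (hlb2.trans hsup_lb)
      have h2 := mul_le_mul_of_nonneg_left h hκpos.le
      calc κ * (N:ℝ) * Real.logb 2 ps
            + κ * ((N:ℝ) * Real.logb 2 (1-α)⁻¹ + Real.logb 2 (Matrix.det R).re)
          = κ * ((N:ℝ) * Real.logb 2 ((1-α)⁻¹ * ps) + Real.logb 2 (Matrix.det R).re) := by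
            rw [hlogmul]; ring
        _ ≤ κ * sSup T := h2
    · have h2 := mul_le_mul_of_nonneg_left (hsup_ub.trans hub2) hκpos.le
      calc κ * sSup T ≤ κ * ((N:ℝ) * (Real.logb 2 (1 + C) + Real.logb 2 ps)) := h2
        _ = κ * (N:ℝ) * Real.logb 2 ps + κ * ((N:ℝ) * Real.logb 2 (1 + C)) := by ring
  · have h : α * (K:ℝ) < 1 * (K:ℝ) :=
      mul_lt_mul_of_pos_right hα1 (by exact_mod_cast hK)
    simpa using h
  · have hNM : (0:ℝ) < (N:ℝ) * (M:ℝ) := mul_pos hNr hMr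
    have h1 : (1-α) * (N:ℝ) * (M:ℝ) < (N:ℝ) * (M:ℝ) := by nlinarith
    exact (div_lt_div_iff_of_pos_right hLr).mpr h1
end
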